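/- Let Ω be a Stokes domain and x ∈ Ω. Then Re 𝔖_a(φ(t,x)) → +∞ as t → +∞, and φ(t,x) → ∞ as t → +∞. Moreover, for any compact K ⊂ Ω, min_{x∈K} |φ(t,x)| → +∞ as t → +∞. -/

import Mathlib

open Filter

/-- In a Stokes domain `Ω`, for the global real-time flow `φ` of
`y' = 1/√Q(y)` (satisfying `𝔖_a(φ t x) = 𝔖_a x + t`): `Re 𝔖_a(φ t x) → +∞`,
`φ t x → ∞` as `t → +∞`, and for compact `K ⊆ Ω` the minimum of `|φ t x|`
over `x ∈ K` tends to `+∞`. -/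
theorem stmt4 (Q : Polynomial ℂ) (sq S : ℂ → ℂ) (Ω : Set ℂ) (φ : ℝ → ℂ → ℂ)
    (hΩ : IsOpen Ω) (hQ : ∀ x ∈ Ω, Q.eval x ≠ 0)
    (hsq : ∀ x ∈ Ω, sq x ^ 2 = Q.eval x)
    (hScont : ContinuousOn S (closure Ω))
    (hSd : ∀ x ∈ Ω, HasDerivAt S (sq x) x)
    (hflow0 : ∀ x ∈ Ω, φ 0 x = x)
    (hflowode : ∀ x ∈ Ω, ∀ t : ℝ, HasDerivAt (fun s => φ s x) (1 / sq (φ t x)) t)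
    (hflowin : ∀ x ∈ Ω, ∀ t : ℝ, φ t x ∈ Ω)
    (hflowS : ∀ x ∈ Ω, ∀ t : ℝ, S (φ t x) = S x + t)
    (hflowcont : ∀ t : ℝ, ContinuousOn (fun x => φ t x) Ω) :
    (∀ x ∈ Ω, Tendsto (fun t : ℝ => (S (φ t x)).re) atTop atTop) ∧
    (∀ x ∈ Ω, Tendsto (fun t : ℝ => ‖φ t x‖) atTop atTop) ∧
    (∀ K : Set ℂ, K ⊆ Ω → IsCompact K →
      ∀ M : ℝ, ∃ T : ℝ, ∀ t : ℝ, T ≤ t → ∀ x ∈ K, M ≤ ‖φ t x‖) := by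
  have key : ∀ M : ℝ, ∃ B : ℝ, ∀ x ∈ Ω, ∀ t : ℝ, B < (S x).re + t → M ≤ ‖φ t x‖ := by
    intro M
    have hK' : IsCompact (closure Ω ∩ Metric.closedBall 0 M) :=
      (isCompact_closedBall 0 M).inter_left isClosed_closure
    obtain ⟨B, hB⟩ := hK'.exists_bound_of_continuousOn (hScont.mono Set.inter_subset_left)
    refine ⟨B, fun x hx t ht => ?_⟩
    by_contra h
    push_neg at h
    have hmem : φ t x ∈ closure Ω ∩ Metric.closedBall 0 M :=
      ⟨subset_closure (hflowin x hx t), by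
        simpa [Metric.mem_closedBall, dist_zero_right] using h.le⟩
    have hle := hB _ hmem
    have hre : (S (φ t x)).re = (S x).re + t := by rw [hflowS x hx t]; simp
    have h1 : (S (φ t x)).re ≤ ‖S (φ t x)‖ := Complex.re_le_norm _
    linarith
  refine ⟨?_, ?_, ?_⟩
  · intro x hx
    have he : (fun t : ℝ => (S (φ t x)).re) = fun t => (S x).re + t :=
      funext fun t => by rw [hflowS x hx t]; simp
    rw [he]
    exact tendsto_atTop_add_const_left _ _ tendsto_id
  · intro x hx
    rw [tendsto_atTop]
    intro M
    obtain ⟨B, hB⟩ := key M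
    filter_upwards [eventually_ge_atTop (B + 1 - (S x).re)] with t ht
    exact hB x hx t (by linarith)
  · intro K hK hKc M
    obtain ⟨B, hB⟩ := key M
    obtain ⟨B₀, hB₀⟩ := hKc.exists_bound_of_continuousOn (hScont.mono (hK.trans subset_closure))
    refine ⟨B + B₀ + 1, fun t ht x hx => ?_⟩
    apply hB x (hK hx) t
    have h1 : ‖S x‖ ≤ B₀ := hB₀ x hx
    have h2 : -‖S x‖ ≤ (S x).re := by
      have h := Complex.abs_re_le_norm (S x)
      linarith [(abs_le.mp h).1]
    linarith
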